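/- Higman–Neumann–Neumann embedding theorem: Every countable group B embeds as a subgroup of a group W generated by two elements. -/

import Mathlib

open Monoid CoprodI Multiplicative Pointwise

namespace HNNAux

variable (B : Type) [Group B]

abbrev HF (B : Type) : Option Bool → Type
  | none => B
  | some _ => Multiplicative ℤ

instance : (i : Option Bool) → Group (HF B i)
  | none => inferInstanceAs (Group B)
  | some _ => inferInstanceAs (Group (Multiplicative ℤ))

noncomputable instance (i : Option Bool) : DecidableEq (HF B i) := Classical.decEq _

abbrev G := CoprodI (HF B)

/-- the two distinguished generators -/
def gen (u : Bool) : G B := CoprodI.of (M := HF B) (i := some u) (ofAdd 1)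

lemma gen_zpow (u : Bool) (k : ℤ) :
    gen B u ^ k = CoprodI.of (M := HF B) (i := some u) (ofAdd k) := by
  rw [gen, ← map_zpow, ← ofAdd_zsmul, smul_eq_mul, mul_one]

variable {B}

lemma head_eq_one_of_fstIdx_ne {i : Option Bool} {w : Word (HF B)}
    (h : Word.fstIdx w ≠ some i) : (Word.equivPair i w).head = 1 := by
  rw [Word.equivPair_eq_of_fstIdx_ne h]

lemma fstIdx_of_smul {j : Option Bool} (m : HF B j) (hm : m ≠ 1) (w : Word (HF B))
    (hw : Word.fstIdx w ≠ some j) :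
    Word.fstIdx (CoprodI.of m • w) = some j := by
  rw [← Word.cons_eq_smul (m := m) (ls := w) (h1 := hw) (h2 := hm)]
  exact Word.fstIdx_cons m w hw hm

lemma head_of_smul_same (i : Option Bool) (m : HF B i) (w : Word (HF B)) :
    (Word.equivPair i (CoprodI.of m • w)).head = m * (Word.equivPair i w).head := by
  rw [Word.equivPair_smul_same]

/-- the key head-tracking lemma -/
lemma helper (u : Bool) (i j : ℤ) (g : B) (hbad : ¬(g = 1 ∧ i + j = 0))
    (w : Word (HF B)) (hw : Word.fstIdx w = some (some (!u))) :
    Word.fstIdx ((gen B u ^ i * CoprodI.of (M := HF B) (i := none) g * gen B u ^ j) • w)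
      ≠ some (some (!u)) := by
  have hne : (some u : Option Bool) ≠ some (!u) := by
    simp [Bool.eq_not_self]
  by_cases hg : g = 1
  · subst hg
    have hij : i + j ≠ 0 := fun h => hbad ⟨rfl, h⟩
    rw [map_one, mul_one, ← zpow_add, gen_zpow]
    rw [fstIdx_of_smul _ (fun h => hij (by exact_mod_cast ofAdd_eq_one.mp ((ofAdd_add i j).symm.trans h))) _ (by rw [hw]; simp [hne])]
    simp [hne]
  · rw [mul_smul, mul_smul]
    have h1 : Word.fstIdx (gen B u ^ j • w) ≠ some none := by
      rcases eq_or_ne j 0 with rfl | hj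
      · rw [zpow_zero, one_smul, hw]; simp
      · rw [gen_zpow, fstIdx_of_smul _ (fun h => hj (ofAdd_eq_one.mp h)) _ (by rw [hw]; simp [hne])]
        simp
    have h2 : Word.fstIdx (CoprodI.of (M := HF B) (i := none) g • (gen B u ^ j • w))
        = some none := fstIdx_of_smul _ hg _ h1
    rcases eq_or_ne i 0 with rfl | hi
    · rw [zpow_zero, one_smul, h2]; simp
    · rw [gen_zpow, fstIdx_of_smul _ (fun h => hi (ofAdd_eq_one.mp h)) _ (by rw [h2]; simp)]
      simp [hne]

/-- words whose first letter is a positive power of generator `v` -/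
def SPos (v : Bool) : Set (Word (HF B)) :=
  {w | 0 < toAdd ((Word.equivPair (some v) w).head : Multiplicative ℤ)}

/-- words whose first letter is a negative power of generator `v` -/
def SNeg (v : Bool) : Set (Word (HF B)) :=
  {w | toAdd ((Word.equivPair (some v) w).head : Multiplicative ℤ) < 0}

lemma mem_SPos_fstIdx {v : Bool} {w : Word (HF B)} (h : w ∈ SPos v) :
    Word.fstIdx w = some (some v) := by
  by_contra hc
  rw [SPos, Set.mem_setOf_eq, head_eq_one_of_fstIdx_ne hc] at h
  simp at h

lemma mem_SNeg_fstIdx {v : Bool} {w : Word (HF B)} (h : w ∈ SNeg v) :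
    Word.fstIdx w = some (some v) := by
  by_contra hc
  rw [SNeg, Set.mem_setOf_eq, head_eq_one_of_fstIdx_ne hc] at h
  simp at h

lemma core_pos {v : Bool} (w : Word (HF B)) (hw : w ∉ SNeg v) : gen B v • w ∈ SPos v := by
  rw [SNeg, Set.mem_setOf_eq, not_lt] at hw
  rw [SPos, Set.mem_setOf_eq, gen, head_of_smul_same]
  rw [show ((ofAdd 1 * (Word.equivPair (some v) w).head : HF B (some v))) =
    ofAdd (1 + toAdd ((Word.equivPair (some v) w).head : Multiplicative ℤ)) from rfl]
  rw [toAdd_ofAdd]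
  omega

lemma core_neg {v : Bool} (w : Word (HF B)) (hw : w ∉ SPos v) : (gen B v)⁻¹ • w ∈ SNeg v := by
  rw [SPos, Set.mem_setOf_eq, not_lt] at hw
  have h1 : (gen B v)⁻¹ = CoprodI.of (M := HF B) (i := some v) (ofAdd (-1)) := by
    rw [← gen_zpow, zpow_neg_one]
  rw [SNeg, Set.mem_setOf_eq, h1, head_of_smul_same]
  rw [show ((ofAdd (-1) * (Word.equivPair (some v) w).head : HF B (some v))) =
    ofAdd (-1 + toAdd ((Word.equivPair (some v) w).head : Multiplicative ℤ)) from rfl]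
  rw [toAdd_ofAdd]
  omega

lemma SPos_nonempty (v : Bool) : (SPos (B := B) v).Nonempty := by
  refine ⟨gen B v • Word.empty, core_pos _ ?_⟩
  intro h
  have := mem_SNeg_fstIdx h
  simp [Word.fstIdx, Word.empty] at this

variable (B) in
/-- the family of elements we prove free -/
def fam (u : Bool) (g : ℕ → B) (n : ℕ) : G B :=
  CoprodI.of (M := HF B) (i := none) (g n) * gen B u ^ (-(n:ℤ)) * gen B (!u) * gen B u ^ (n:ℤ)

theorem key (u : Bool) (g : ℕ → B) : Function.Injective ⇑(FreeGroup.lift (fam B u g)) := by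
  classical
  refine FreeGroup.injective_lift_of_ping_pong (fam B u g)
    (fun n => (CoprodI.of (M := HF B) (i := none) (g n) * gen B u ^ (-(n:ℤ))) • SPos (B := B) (!u))
    (fun n => (gen B u ^ (-(n:ℤ))) • SNeg (B := B) (!u)) ?_ ?_ ?_ ?_ ?_ ?_
  · exact fun n => (SPos_nonempty (!u)).smul_set
  · -- X pairwise disjoint
    intro m n hmn
    simp only [Function.onFun]
    rw [Set.disjoint_left]
    rintro x ⟨s, hs, rfl⟩ ⟨s', hs', heq⟩
    have hss : s = (gen B u ^ (m:ℤ) * CoprodI.of (M := HF B) (i := none) ((g m)⁻¹ * g n)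
        * gen B u ^ (-(n:ℤ))) • s' := by
      have hc : (CoprodI.of (M := HF B) (i := none) (g m) * gen B u ^ (-(m:ℤ)))⁻¹ *
          (CoprodI.of (M := HF B) (i := none) (g n) * gen B u ^ (-(n:ℤ))) =
          gen B u ^ (m:ℤ) * CoprodI.of (M := HF B) (i := none) ((g m)⁻¹ * g n)
            * gen B u ^ (-(n:ℤ)) := by
        rw [map_mul, map_inv]; group
      rw [← hc, mul_smul]
      rw [eq_inv_smul_iff]
      exact heq.symm
    have := helper u (m:ℤ) (-(n:ℤ)) ((g m)⁻¹ * g n)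
      (by rintro ⟨-, h2⟩; exact hmn (by omega)) s' (mem_SPos_fstIdx hs')
    rw [← hss] at this
    exact this (mem_SPos_fstIdx hs)
  · -- Y pairwise disjoint
    intro m n hmn
    simp only [Function.onFun]
    rw [Set.disjoint_left]
    rintro x ⟨s, hs, rfl⟩ ⟨s', hs', heq⟩
    have hss : s = (gen B u ^ (m:ℤ) * CoprodI.of (M := HF B) (i := none) ((1:B)⁻¹ * 1)
        * gen B u ^ (-(n:ℤ))) • s' := by
      have hc : (gen B u ^ (-(m:ℤ)))⁻¹ * gen B u ^ (-(n:ℤ)) =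
          gen B u ^ (m:ℤ) * CoprodI.of (M := HF B) (i := none) ((1:B)⁻¹ * 1)
            * gen B u ^ (-(n:ℤ)) := by
        simp only [inv_one, one_mul, map_one, mul_one]; group
      rw [← hc, mul_smul, eq_inv_smul_iff]
      exact heq.symm
    have := helper u (m:ℤ) (-(n:ℤ)) ((1:B)⁻¹ * 1)
      (by rintro ⟨-, h2⟩; exact hmn (by omega)) s' (mem_SNeg_fstIdx hs')
    rw [← hss] at this
    exact this (mem_SNeg_fstIdx hs)
  · -- X and Y disjoint
    intro m n
    rw [Set.disjoint_left]
    rintro x ⟨s, hs, rfl⟩ ⟨s', hs', heq⟩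
    have hss : s = (gen B u ^ (m:ℤ) * CoprodI.of (M := HF B) (i := none) ((g m)⁻¹ * 1)
        * gen B u ^ (-(n:ℤ))) • s' := by
      have hc : (CoprodI.of (M := HF B) (i := none) (g m) * gen B u ^ (-(m:ℤ)))⁻¹ *
          gen B u ^ (-(n:ℤ)) =
          gen B u ^ (m:ℤ) * CoprodI.of (M := HF B) (i := none) ((g m)⁻¹ * 1)
            * gen B u ^ (-(n:ℤ)) := by
        rw [mul_one, map_inv]; group
      rw [← hc, mul_smul, eq_inv_smul_iff]
      exact heq.symm
    by_cases hcase : ((g m)⁻¹ * 1 = 1 ∧ (m:ℤ) + -(n:ℤ) = 0)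
    · have hmn : (m:ℤ) = (n:ℤ) := by omega
      have : s = s' := by
        rw [hss, hcase.1, map_one, mul_one, hmn, ← zpow_add]
        simp
      rw [SPos, Set.mem_setOf_eq] at hs
      rw [SNeg, Set.mem_setOf_eq] at hs'
      rw [this] at hs
      omega
    · have := helper u (m:ℤ) (-(n:ℤ)) ((g m)⁻¹ * 1) hcase s' (mem_SNeg_fstIdx hs')
      rw [← hss] at this
      exact this (mem_SPos_fstIdx hs)
  · -- ping
    intro n
    rintro x ⟨w, hw, rfl⟩
    dsimp only
    have hw2 : gen B u ^ (n:ℤ) • w ∉ SNeg (!u) := by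
      intro h
      exact hw ⟨gen B u ^ (n:ℤ) • w, h, by
        show gen B u ^ (-(n:ℤ)) • gen B u ^ (n:ℤ) • w = w
        rw [← mul_smul, ← zpow_add]; simp⟩
    have hfact : fam B u g n = (CoprodI.of (M := HF B) (i := none) (g n) *
        gen B u ^ (-(n:ℤ))) * (gen B (!u) * gen B u ^ (n:ℤ)) := by
      rw [fam]; group
    refine Set.mem_smul_set.2 ⟨gen B (!u) • gen B u ^ (n:ℤ) • w, core_pos _ hw2, ?_⟩
    show (CoprodI.of (M := HF B) (i := none) (g n) * gen B u ^ (-(n:ℤ))) •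
      (gen B (!u) • gen B u ^ (n:ℤ) • w) = fam B u g n • w
    rw [hfact]
    simp only [mul_smul]
  · -- pong
    intro n
    rintro x ⟨w, hw, rfl⟩
    simp only [Pi.inv_apply]
    have hw2 : (CoprodI.of (M := HF B) (i := none) (g n) * gen B u ^ (-(n:ℤ)))⁻¹ • w
        ∉ SPos (!u) := by
      intro h
      exact hw ⟨_, h, smul_inv_smul _ _⟩
    have hfact : (fam B u g n)⁻¹ = gen B u ^ (-(n:ℤ)) * ((gen B (!u))⁻¹ *
        (CoprodI.of (M := HF B) (i := none) (g n) * gen B u ^ (-(n:ℤ)))⁻¹) := by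
      rw [fam]; group
    refine Set.mem_smul_set.2 ⟨(gen B (!u))⁻¹ •
      ((CoprodI.of (M := HF B) (i := none) (g n) * gen B u ^ (-(n:ℤ)))⁻¹ • w),
      core_neg _ hw2, ?_⟩
    show gen B u ^ (-(n:ℤ)) • ((gen B (!u))⁻¹ •
      ((CoprodI.of (M := HF B) (i := none) (g n) * gen B u ^ (-(n:ℤ)))⁻¹ • w))
      = (fam B u g n)⁻¹ • w
    rw [hfact]
    simp only [mul_smul]

theorem main (B : Type) [Group B] [Countable B] :
    ∃ (W : Type) (_ : Group W) (x y : W),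
      Subgroup.closure {x, y} = (⊤ : Subgroup W) ∧
      ∃ φ : B →* W, Function.Injective φ := by
  classical
  obtain ⟨e, he0, hesurj⟩ : ∃ e : ℕ → B, e 0 = 1 ∧ ∀ b : B, ∃ n, e n = b := by
    obtain ⟨e', he'⟩ := exists_surjective_nat B
    refine ⟨fun n => Nat.casesOn n 1 e', rfl, fun b => ?_⟩
    obtain ⟨n, hn⟩ := he' b
    exact ⟨n + 1, hn⟩
  have hU : Function.Injective ⇑(FreeGroup.lift (fam B true (fun _ => 1))) :=
    key true (fun _ => 1)
  have hV : Function.Injective ⇑(FreeGroup.lift (fam B false e)) := key false e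
  set U : Subgroup (G B) := (FreeGroup.lift (fam B true (fun _ => 1))).range with hUdef
  set V : Subgroup (G B) := (FreeGroup.lift (fam B false e)).range with hVdef
  let φ : U ≃* V := (MonoidHom.ofInjective hU).symm.trans (MonoidHom.ofInjective hV)
  let W := HNNExtension (G B) U V φ
  let F : G B →* W := HNNExtension.of
  have hmemU : ∀ n, fam B true (fun _ => 1) n ∈ U := fun n => ⟨FreeGroup.of n, by simp⟩
  have hφ : ∀ n, ((φ ⟨fam B true (fun _ => 1) n, hmemU n⟩ : V) : G B) = fam B false e n := by
    intro n
    have h1 : MonoidHom.ofInjective hU (FreeGroup.of n) =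
        ⟨fam B true (fun _ => 1) n, hmemU n⟩ :=
      Subtype.ext (by rw [MonoidHom.ofInjective_apply]; simp)
    have h2 : φ ⟨fam B true (fun _ => 1) n, hmemU n⟩ =
        MonoidHom.ofInjective hV (FreeGroup.of n) := by
      show (MonoidHom.ofInjective hU).symm.trans (MonoidHom.ofInjective hV) _ = _
      rw [MulEquiv.trans_apply, ← h1, MulEquiv.symm_apply_apply]
    rw [h2, MonoidHom.ofInjective_apply]
    simp
  have rel : ∀ n, F (fam B false e n) =
      HNNExtension.t * F (fam B true (fun _ => 1) n) * HNNExtension.t⁻¹ := by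
    intro n
    have h := HNNExtension.t_mul_of (φ := φ) ⟨fam B true (fun _ => 1) n, hmemU n⟩
    rw [hφ n] at h
    replace h : HNNExtension.t * F (fam B true (fun _ => 1) n) =
        F (fam B false e n) * HNNExtension.t := h
    rw [h]
    group
  refine ⟨W, inferInstance, F (gen B true), HNNExtension.t, ?_, ?_⟩
  · -- generation by two elements
    set T := Subgroup.closure ({F (gen B true), HNNExtension.t} : Set W) with hT
    have hx : F (gen B true) ∈ T := Subgroup.subset_closure (by simp)
    have hy : (HNNExtension.t : W) ∈ T := Subgroup.subset_closure (by simp)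
    have hb : F (gen B false) ∈ T := by
      have h0 : fam B true (fun _ => 1) 0 = gen B false := by
        simp [fam]
      have h0' : fam B false e 0 = gen B true := by
        simp [fam, he0]
      have := rel 0
      rw [h0, h0'] at this
      have hgf : F (gen B false) = HNNExtension.t⁻¹ * F (gen B true) * HNNExtension.t := by
        rw [this]; group
      rw [hgf]
      exact mul_mem (mul_mem (inv_mem hy) hx) hy
    have hgen : ∀ u : Bool, F (gen B u) ∈ T := by
      intro u; cases u
      · exact hb
      · exact hx
    have hpow : ∀ (u : Bool) (k : ℤ), F (gen B u ^ k) ∈ T := fun u k => by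
      rw [map_zpow]; exact zpow_mem (hgen u) k
    have hfamU : ∀ n, F (fam B true (fun _ => 1) n) ∈ T := by
      intro n
      rw [fam, map_mul, map_mul, map_mul]
      refine mul_mem (mul_mem (mul_mem ?_ (hpow _ _)) (hgen _)) (hpow _ _)
      rw [show (CoprodI.of (M := HF B) (i := none) ((fun _ => (1:B)) n)) = 1 from map_one _,
        map_one]
      exact one_mem T
    have hofB : ∀ b : B, F (CoprodI.of (M := HF B) (i := none) b) ∈ T := by
      intro b
      obtain ⟨n, rfl⟩ := hesurj b
      have hrw : CoprodI.of (M := HF B) (i := none) (e n) =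
          fam B false e n * (gen B false ^ (-(n:ℤ)) * gen B true * gen B false ^ ((n:ℤ)))⁻¹ := by
        rw [fam]; simp only [Bool.not_false]; group
      rw [hrw, map_mul, map_inv]
      refine mul_mem ?_ (inv_mem ?_)
      · rw [rel n]
        exact mul_mem (mul_mem hy (hfamU n)) (inv_mem hy)
      · rw [map_mul, map_mul]
        exact mul_mem (mul_mem (hpow _ _) (hgen _)) (hpow _ _)
    have hG : ∀ x : G B, F x ∈ T := by
      intro x
      induction x using CoprodI.induction_on with
      | one => rw [map_one]; exact one_mem T
      | of i m =>
        rcases i with - | u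
        · exact hofB m
        · have hm : CoprodI.of (M := HF B) (i := some u) m = gen B u ^ (toAdd m) := by
            rw [gen_zpow, ofAdd_toAdd]
          rw [hm]
          exact hpow u _
      | mul x y hx' hy' => rw [map_mul]; exact mul_mem hx' hy'
    have htop : ∀ w : W, w ∈ T := by
      intro w
      induction w using HNNExtension.induction_on with
      | of g => exact hG g
      | t => exact hy
      | mul x y hx' hy' => exact mul_mem hx' hy'
      | inv x hx' => exact inv_mem hx'
    exact eq_top_iff.mpr fun w _ => htop w
  · -- the embedding
    refine ⟨F.comp (CoprodI.of (M := HF B) (i := none)), ?_⟩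
    rw [MonoidHom.coe_comp]
    exact Function.Injective.comp (HNNExtension.of_injective φ) (CoprodI.of_injective none)

end HNNAux


/-- **Higman–Neumann–Neumann embedding theorem**: every countable group embeds
as a subgroup of a group generated by two elements. -/
theorem higman_neumann_neumann_embedding (B : Type*) [Group B] [Countable B] :
    ∃ (W : Type) (_ : Group W) (x y : W),
      Subgroup.closure {x, y} = (⊤ : Subgroup W) ∧
      ∃ φ : B →* W, Function.Injective φ := by
  have hsmall : Small.{0} B := by infer_instance
  have hcount : Countable (Shrink B) := (equivShrink B).symm.injective.countable
  obtain ⟨W, instW, x, y, hcl, ψ, hψ⟩ := HNNAux.main (Shrink B)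
  exact ⟨W, instW, x, y, hcl, ψ.comp (Shrink.mulEquiv (α := B)).symm.toMonoidHom,
    by rw [MonoidHom.coe_comp]; exact hψ.comp (MulEquiv.injective _)⟩
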